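/- Let α, β : ℤ × ℤ → ℂ be double sequences with β antisymmetric (β(n,k) = −β(k,n)), α(n,n) ≠ 0 for all n, and β(n,k) ≠ 0 whenever n ≠ k. Suppose the matrices F and G with entries F(n,k) = (∏_{i=k}^{n−1} α(i,k)) / (∏_{i=k+1}^{n} β(i,k)) and G(n,k) = (α(k,k)/α(n,n)) · (∏_{i=k+1}^{n} α(i,n)) / (∏_{i=k}^{n−1} β(i,n)) (for k ≤ n) form a matrix inversion. Define f(k,n;i) = (−1)^{n−i} · [ ∏_{(j₁,j₂): k ≤ j₁ < j₂ ≤ n, j₁ ≠ i, j₂ ≠ i} β(j₁,j₂) ] · [ ∏_{j=k+1}^{n−1} α(j,i) ] and g(k,n;i) = (−1)^{n−i} · [ ∏_{(j₁,j₂): k ≤ j₁ < j₂ ≤ n, j₁ ≠ i, j₂ ≠ i, j₂ − j₁ ≤ n−k−1} β(j₁,j₂) ] · [ ∏_{j=k+1}^{n−1} α(j,i) ]. Then for all integers k ≤ n such that ∑_{i=k+1}^{n−1} g(k,n;i) ≠ 0, one has β(k,n) = −( f(k,n;k) + f(k,n;n) ) / ( ∑_{i=k+1}^{n−1} g(k,n;i)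 ). -/
import Mathlib


open Finset

/-- `f(k,n;i) = (-1)^{n-i} * ∏_{k ≤ j₁ < j₂ ≤ n, j₁ ≠ i, j₂ ≠ i} β(j₁,j₂)
    * ∏_{j=k+1}^{n-1} α(j,i)`. -/
noncomputable def fAux (α β : ℤ → ℤ → ℂ) (k n i : ℤ) : ℂ :=
  (-1 : ℂ) ^ (n - i) *
    (∏ p ∈ (Finset.Icc k n ×ˢ Finset.Icc k n).filter
        (fun p => p.1 < p.2 ∧ p.1 ≠ i ∧ p.2 ≠ i), β p.1 p.2) *
    ∏ j ∈ Finset.Icc (k + 1) (n - 1), α j i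

/-- `g(k,n;i) = (-1)^{n-i} * ∏_{k ≤ j₁ < j₂ ≤ n, j₁ ≠ i, j₂ ≠ i, j₂ - j₁ ≤ n-k-1} β(j₁,j₂)
    * ∏_{j=k+1}^{n-1} α(j,i)`. -/
noncomputable def gAux (α β : ℤ → ℤ → ℂ) (k n i : ℤ) : ℂ :=
  (-1 : ℂ) ^ (n - i) *
    (∏ p ∈ (Finset.Icc k n ×ˢ Finset.Icc k n).filter
        (fun p => p.1 < p.2 ∧ p.1 ≠ i ∧ p.2 ≠ i ∧ p.2 - p.1 ≤ n - k - 1), β p.1 p.2) *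
    ∏ j ∈ Finset.Icc (k + 1) (n - 1), α j i

lemma prod_alpha_split (α : ℤ → ℤ → ℂ) (k n i : ℤ) (hk : k ≤ i) (hn : i ≤ n)
    (hkn : k < n) :
    (∏ j ∈ Icc i (n-1), α j i) * (∏ j ∈ Icc (k+1) i, α j i)
      = α i i * ∏ j ∈ Icc (k+1) (n-1), α j i := by
  rcases eq_or_lt_of_le hn with rfl | hlt
  · have h1 : Icc i (i-1) = (∅ : Finset ℤ) := by
      apply Finset.Icc_eq_empty; omega
    have h2 : Icc (k+1) i = insert i (Icc (k+1) (i-1)) := by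
      ext x; simp only [Finset.mem_Icc, Finset.mem_insert]
      constructor <;> intro h <;> omega
    have h3 : i ∉ Icc (k+1) (i-1) := by
      simp only [Finset.mem_Icc]; omega
    rw [h1, h2, Finset.prod_insert h3]
    ring
  · have h1 : Icc i (n-1) = insert i (Icc (i+1) (n-1)) := by
      ext x; simp only [Finset.mem_Icc, Finset.mem_insert]
      constructor <;> intro h <;> omega
    have h3 : i ∉ Icc (i+1) (n-1) := by
      simp only [Finset.mem_Icc]; omega
    rw [h1, Finset.prod_insert h3]
    have h4 : Icc (k+1) (n-1) = Icc (k+1) i ∪ Icc (i+1) (n-1) := by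
      ext x; simp only [Finset.mem_Icc, Finset.mem_union]
      constructor <;> intro h <;> omega
    have h5 : Disjoint (Icc (k+1) i) (Icc (i+1) (n-1)) := by
      rw [Finset.disjoint_left]; intro x hx hx'
      simp only [Finset.mem_Icc] at hx hx'; omega
    rw [h4, Finset.prod_union h5]
    ring

lemma prod_beta_split (β : ℤ → ℤ → ℂ) (hanti : ∀ n k : ℤ, β n k = -β k n)
    (k n i : ℤ) (hk : k ≤ i) (hn : i ≤ n) :
    (∏ j ∈ Icc (i+1) n, β j i) * (∏ j ∈ Icc k (i-1), β j i) *
      (∏ p ∈ (Icc k n ×ˢ Icc k n).filter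
          (fun p => p.1 < p.2 ∧ p.1 ≠ i ∧ p.2 ≠ i), β p.1 p.2)
    = (-1:ℂ) ^ ((n-i).toNat) *
      ∏ p ∈ (Icc k n ×ˢ Icc k n).filter (fun p => p.1 < p.2), β p.1 p.2 := by
  set T : Finset (ℤ × ℤ) := (Icc k n ×ˢ Icc k n).filter (fun p => p.1 < p.2) with hT
  have hT1 : T.filter (fun p => p.1 = i) = (Icc (i+1) n).image (fun j => (i, j)) := by
    ext p
    simp only [hT, Finset.mem_filter, Finset.mem_product, Finset.mem_Icc,
      Finset.mem_image, Prod.ext_iff]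
    constructor
    · rintro ⟨⟨⟨⟨ha, hb⟩, hc, hd⟩, hlt⟩, heq⟩
      exact ⟨p.2, ⟨by omega, hd⟩, heq.symm, rfl⟩
    · rintro ⟨j, ⟨hj1, hj2⟩, h1, h2⟩
      refine ⟨⟨⟨⟨by omega, by omega⟩, by omega, by omega⟩, by omega⟩, by omega⟩
  have hT2 : T.filter (fun p => p.2 = i) = (Icc k (i-1)).image (fun j => (j, i)) := by
    ext p
    simp only [hT, Finset.mem_filter, Finset.mem_product, Finset.mem_Icc,
      Finset.mem_image, Prod.ext_iff]
    constructor
    · rintro ⟨⟨⟨⟨ha, hb⟩, hc, hd⟩, hlt⟩, heq⟩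
      exact ⟨p.1, ⟨ha, by omega⟩, rfl, heq.symm⟩
    · rintro ⟨j, ⟨hj1, hj2⟩, h1, h2⟩
      refine ⟨⟨⟨⟨by omega, by omega⟩, by omega, by omega⟩, by omega⟩, by omega⟩
  have hprod1 : ∏ p ∈ T.filter (fun p => p.1 = i), β p.1 p.2
      = ∏ j ∈ Icc (i+1) n, β i j := by
    rw [hT1, Finset.prod_image]
    intro x _ y _ h
    simpa using h
  have hprod2 : ∏ p ∈ T.filter (fun p => p.2 = i), β p.1 p.2
      = ∏ j ∈ Icc k (i-1), β j i := by
    rw [hT2, Finset.prod_image]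
    intro x _ y _ h
    simpa using h
  have hflip : (∏ j ∈ Icc (i+1) n, β j i)
      = (-1:ℂ) ^ ((n-i).toNat) * ∏ j ∈ Icc (i+1) n, β i j := by
    have h1 : (∏ j ∈ Icc (i+1) n, β j i) = ∏ j ∈ Icc (i+1) n, (-1 : ℂ) * β i j := by
      refine Finset.prod_congr rfl fun j hj => ?_
      rw [hanti]; ring
    have h2 : (Icc (i+1) n).card = (n - i).toNat := by
      rw [Int.card_Icc]; omega
    rw [h1, ← Finset.pow_card_mul_prod, h2]
  have hsplit1 : (∏ p ∈ T, β p.1 p.2)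
      = (∏ p ∈ T.filter (fun p => p.1 ≠ i ∧ p.2 ≠ i), β p.1 p.2) *
        ∏ p ∈ T.filter (fun p => ¬(p.1 ≠ i ∧ p.2 ≠ i)), β p.1 p.2 :=
    (Finset.prod_filter_mul_prod_filter_not T _ _).symm
  have hsplit2 : T.filter (fun p => ¬(p.1 ≠ i ∧ p.2 ≠ i))
      = T.filter (fun p => p.1 = i) ∪ T.filter (fun p => p.2 = i) := by
    ext p
    simp only [Finset.mem_filter, Finset.mem_union]
    tauto
  have hdisj : Disjoint (T.filter (fun p => p.1 = i)) (T.filter (fun p => p.2 = i)) := by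
    rw [Finset.disjoint_left]
    intro p hp hp'
    simp only [hT, Finset.mem_filter, Finset.mem_product, Finset.mem_Icc] at hp hp'
    omega
  have hTprod : (∏ p ∈ T, β p.1 p.2)
      = (∏ p ∈ T.filter (fun p => p.1 ≠ i ∧ p.2 ≠ i), β p.1 p.2) *
        ((∏ j ∈ Icc (i+1) n, β i j) * ∏ j ∈ Icc k (i-1), β j i) := by
    rw [hsplit1, hsplit2, Finset.prod_union hdisj, hprod1, hprod2]
  have hFset : (Icc k n ×ˢ Icc k n).filter
      (fun p => p.1 < p.2 ∧ p.1 ≠ i ∧ p.2 ≠ i)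
      = T.filter (fun p => p.1 ≠ i ∧ p.2 ≠ i) := by
    rw [hT, Finset.filter_filter]
  rw [hFset, hflip, hTprod]
  ring

lemma term_mul_P (α β : ℤ → ℤ → ℂ)
    (hanti : ∀ n k : ℤ, β n k = -β k n)
    (hα : ∀ n : ℤ, α n n ≠ 0)
    (hβ : ∀ n k : ℤ, n ≠ k → β n k ≠ 0)
    (k n i : ℤ) (hk : k ≤ i) (hn : i ≤ n) (hkn : k < n) :
    (((∏ j ∈ Icc i (n - 1), α j i) / (∏ j ∈ Icc (i + 1) n, β j i)) *
        ((α k k / α i i) *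
          (∏ j ∈ Icc (k + 1) i, α j i) / (∏ j ∈ Icc k (i - 1), β j i))) *
      (∏ p ∈ (Icc k n ×ˢ Icc k n).filter (fun p => p.1 < p.2), β p.1 p.2)
    = α k k * fAux α β k n i := by
  have hB1 : (∏ j ∈ Icc (i + 1) n, β j i) ≠ 0 := by
    apply Finset.prod_ne_zero_iff.mpr
    intro j hj
    simp only [Finset.mem_Icc] at hj
    exact hβ j i (by omega)
  have hB2 : (∏ j ∈ Icc k (i - 1), β j i) ≠ 0 := by
    apply Finset.prod_ne_zero_iff.mpr
    intro j hj
    simp only [Finset.mem_Icc] at hj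
    exact hβ j i (by omega)
  have hsign : ((-1 : ℂ)) ^ (n - i) = (-1 : ℂ) ^ ((n - i).toNat) := by
    have ht : (((n - i).toNat : ℤ)) = n - i := Int.toNat_of_nonneg (by omega)
    conv_lhs => rw [← ht]
    exact zpow_natCast _ _
  have key1 := prod_alpha_split α k n i hk hn hkn
  have key2 := prod_beta_split β hanti k n i hk hn
  have hε : (-1 : ℂ) ^ ((n - i).toNat) * (-1 : ℂ) ^ ((n - i).toNat) = 1 := by
    rw [← pow_add]
    exact Even.neg_one_pow ⟨_, rfl⟩
  have hαi := hα i
  rw [fAux, hsign]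
  set A1 := ∏ j ∈ Icc i (n - 1), α j i
  set A2 := ∏ j ∈ Icc (k + 1) i, α j i
  set A := ∏ j ∈ Icc (k + 1) (n - 1), α j i
  set B1 := ∏ j ∈ Icc (i + 1) n, β j i
  set B2 := ∏ j ∈ Icc k (i - 1), β j i
  set F := ∏ p ∈ (Icc k n ×ˢ Icc k n).filter
      (fun p => p.1 < p.2 ∧ p.1 ≠ i ∧ p.2 ≠ i), β p.1 p.2
  set P := ∏ p ∈ (Icc k n ×ˢ Icc k n).filter (fun p => p.1 < p.2), β p.1 p.2
  field_simp [hB1, hB2, hαi]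
  linear_combination (α k k * P) * key1 -
    (α i i * α k k * A * ((-1 : ℂ) ^ ((n - i).toNat))) * key2 -
    (α i i * α k k * A * P) * hε

/-- Proposition 3.8 (Wang–Ma): if `α, β` (with `β` antisymmetric, `α n n ≠ 0`,
`β n k ≠ 0` for `n ≠ k`) give rise to an `(α,β)`-matrix inversion, then for
all `k ≤ n` with `∑_{i=k+1}^{n-1} g(k,n;i) ≠ 0`,
`β k n = -(f(k,n;k) + f(k,n;n)) / ∑_{i=k+1}^{n-1} g(k,n;i)`. -/
theorem beta_formula_from_inversion
    (α β : ℤ → ℤ → ℂ)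
    (hanti : ∀ n k : ℤ, β n k = -β k n)
    (hα : ∀ n : ℤ, α n n ≠ 0)
    (hβ : ∀ n k : ℤ, n ≠ k → β n k ≠ 0)
    (hinv : ∀ k n : ℤ, k ≤ n →
      (∑ i ∈ Finset.Icc k n,
        ((∏ j ∈ Finset.Icc i (n - 1), α j i) / (∏ j ∈ Finset.Icc (i + 1) n, β j i)) *
        ((α k k / α i i) *
          (∏ j ∈ Finset.Icc (k + 1) i, α j i) / (∏ j ∈ Finset.Icc k (i - 1), β j i))) =
      if n = k then 1 else 0) :
    ∀ k n : ℤ, k ≤ n →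
      (∑ i ∈ Finset.Icc (k + 1) (n - 1), gAux α β k n i) ≠ 0 →
      β k n = -(fAux α β k n k + fAux α β k n n) /
        (∑ i ∈ Finset.Icc (k + 1) (n - 1), gAux α β k n i) := by
  intro k n hkn hg
  -- we must have n ≥ k + 2
  have hn2 : k + 2 ≤ n := by
    by_contra h
    apply hg
    have he : Finset.Icc (k+1) (n-1) = (∅ : Finset ℤ) := by
      apply Finset.Icc_eq_empty; omega
    rw [he, Finset.sum_empty]
  have hkltn : k < n := by omega
  set P := ∏ p ∈ (Icc k n ×ˢ Icc k n).filter (fun p => p.1 < p.2), β p.1 p.2 with hP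
  have hsum0 := hinv k n hkn
  rw [if_neg (by omega)] at hsum0
  -- the key orthogonality identity: ∑ f = 0
  have hsumf : ∑ i ∈ Finset.Icc k n, fAux α β k n i = 0 := by
    have h1 : α k k * ∑ i ∈ Finset.Icc k n, fAux α β k n i
        = (∑ i ∈ Finset.Icc k n,
            ((∏ j ∈ Finset.Icc i (n - 1), α j i) / (∏ j ∈ Finset.Icc (i + 1) n, β j i)) *
            ((α k k / α i i) *
              (∏ j ∈ Finset.Icc (k + 1) i, α j i) /
                (∏ j ∈ Finset.Icc k (i - 1), β j i))) * P := by
      rw [Finset.mul_sum, Finset.sum_mul]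
      refine Finset.sum_congr rfl fun i hi => ?_
      simp only [Finset.mem_Icc] at hi
      exact (term_mul_P α β hanti hα hβ k n i hi.1 hi.2 hkltn).symm
    rw [hsum0, zero_mul] at h1
    exact (mul_eq_zero.mp h1).resolve_left (hα k)
  -- for interior i, f = β k n * g
  have hint : ∀ i ∈ Finset.Icc (k+1) (n-1),
      fAux α β k n i = β k n * gAux α β k n i := by
    intro i hi
    simp only [Finset.mem_Icc] at hi
    have hnot : ((k, n) : ℤ × ℤ) ∉ (Finset.Icc k n ×ˢ Finset.Icc k n).filter
        (fun p => p.1 < p.2 ∧ p.1 ≠ i ∧ p.2 ≠ i ∧ p.2 - p.1 ≤ n - k - 1) := by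
      simp only [Finset.mem_filter, Finset.mem_product, Finset.mem_Icc]
      intro h
      omega
    have hset : (Finset.Icc k n ×ˢ Finset.Icc k n).filter
        (fun p => p.1 < p.2 ∧ p.1 ≠ i ∧ p.2 ≠ i)
        = insert ((k, n) : ℤ × ℤ) ((Finset.Icc k n ×ˢ Finset.Icc k n).filter
          (fun p => p.1 < p.2 ∧ p.1 ≠ i ∧ p.2 ≠ i ∧ p.2 - p.1 ≤ n - k - 1)) := by
      ext p
      simp only [Finset.mem_filter, Finset.mem_product, Finset.mem_Icc,
        Finset.mem_insert, Prod.ext_iff, ne_eq]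
      constructor
      · rintro ⟨⟨⟨h1, h2⟩, h3, h4⟩, h5, h6, h7⟩
        by_cases hc : p.2 - p.1 ≤ n - k - 1
        · right; exact ⟨⟨⟨h1, h2⟩, h3, h4⟩, h5, h6, h7, hc⟩
        · left; constructor <;> omega
      · rintro (⟨h1, h2⟩ | ⟨⟨⟨h1, h2⟩, h3, h4⟩, h5, h6, h7, h8⟩)
        · refine ⟨⟨⟨by omega, by omega⟩, by omega, by omega⟩, by omega, by omega, by omega⟩
        · exact ⟨⟨⟨h1, h2⟩, h3, h4⟩, h5, h6, h7⟩
    rw [fAux, gAux, hset, Finset.prod_insert hnot]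
    ring
  -- split the sum ∑_{i=k}^{n} f into endpoints and interior
  have s1 : Finset.Icc k n = insert k (Finset.Icc (k+1) n) := by
    ext x; simp only [Finset.mem_Icc, Finset.mem_insert]
    constructor <;> intro h <;> omega
  have s2 : Finset.Icc (k+1) n = insert n (Finset.Icc (k+1) (n-1)) := by
    ext x; simp only [Finset.mem_Icc, Finset.mem_insert]
    constructor <;> intro h <;> omega
  have m1 : k ∉ Finset.Icc (k+1) n := by simp only [Finset.mem_Icc]; omega
  have m2 : n ∉ Finset.Icc (k+1) (n-1) := by simp only [Finset.mem_Icc]; omega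
  rw [s1, Finset.sum_insert m1, s2, Finset.sum_insert m2,
    Finset.sum_congr rfl hint, ← Finset.mul_sum] at hsumf
  rw [eq_div_iff hg]
  linear_combination hsumf
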